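/- Let s₁, …, s_n be exchangeable real-valued random variables, and let s_{new} be a further random variable such that (s₁,…,s_n,s_{new}) is exchangeable. For δ ∈ (0,1), let q be the ⌈(1−δ)(n+1)⌉-th smallest value among s₁,…,s_n (set q = +∞ if ⌈(1−δ)(n+1)⌉ > n). Then P[s_{new} ≤ q] ≥ 1 − δ. -/

import Mathlib

open MeasureTheory Finset ENNReal

/-- The `k`-th smallest value (1-indexed) among the entries of `v`, as an extended real;
`⊤` if `k` is out of range. -/
noncomputable def orderStat {n : ℕ} (v : Fin n → ℝ) (k : ℕ) : EReal :=
  if h : 1 ≤ k ∧ k ≤ n then (((v ∘ Tuple.sort v) ⟨k - 1, by omega⟩ : ℝ) : EReal) else ⊤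

-- sublemma: if w j < w (sort w m) then (sort w).symm j < m
lemma aux_sort_inv_lt {N : ℕ} (w : Fin N → ℝ) (j m : Fin N)
    (h : w j < w (Tuple.sort w m)) : ((Tuple.sort w).symm j : ℕ) < (m : ℕ) := by
  by_contra hc
  push_neg at hc
  have hmono := Tuple.monotone_sort w (show m ≤ (Tuple.sort w).symm j from by
    exact Fin.le_def.mpr hc)
  simp only [Function.comp_apply, Equiv.apply_symm_apply] at hmono
  linarith

lemma aux_card_lt {N : ℕ} (w : Fin N → ℝ) (m : Fin N) :
    (univ.filter fun j => w j < w (Tuple.sort w m)).card ≤ (m : ℕ) := by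
  classical
  calc (univ.filter fun j => w j < w (Tuple.sort w m)).card
      ≤ (Finset.range (m : ℕ)).card := by
        apply Finset.card_le_card_of_injOn (fun j => ((Tuple.sort w).symm j : ℕ))
        · intro j hj
          rw [Finset.mem_coe, mem_filter] at hj
          exact Finset.mem_range.mpr (aux_sort_inv_lt w j m hj.2)
        · intro a _ b _ hab
          exact (Tuple.sort w).symm.injective (Fin.val_injective hab)
    _ = (m : ℕ) := Finset.card_range _

lemma aux_card_val_lt {n k : ℕ} (hk : k ≤ n) :
    ((Finset.univ.filter fun t : Fin n => (t : ℕ) < k)).card = k := by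
  classical
  have : ((Finset.univ.filter fun t : Fin n => (t : ℕ) < k)).card = (Finset.range k).card := by
    apply Finset.card_bij (fun (t : Fin n) _ => (t : ℕ))
    · intro a ha; simp only [mem_filter] at ha; exact Finset.mem_range.mpr ha.2
    · intro a _ b _ hab; exact Fin.val_injective hab
    · intro b hb
      exact ⟨⟨b, lt_of_lt_of_le (Finset.mem_range.mp hb) hk⟩, by simp [Finset.mem_range.mp hb], rfl⟩
  rw [this, Finset.card_range]

/-- key1: `x ≤` k-th order statistic of `v` iff fewer than `k` entries of `v` are `< x`. -/
lemma aux_key1 {n : ℕ} (v : Fin n → ℝ) (x : ℝ) (k : ℕ) (hk1 : 1 ≤ k) (hkn : k ≤ n) :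
    x ≤ v (Tuple.sort v ⟨k - 1, by omega⟩) ↔
      (univ.filter fun j => v j < x).card < k := by
  classical
  constructor
  · intro hx
    have hsub : (univ.filter fun j => v j < x) ⊆
        (univ.filter fun j => v j < v (Tuple.sort v ⟨k - 1, by omega⟩)) := by
      intro j hj
      simp only [mem_filter, mem_univ, true_and] at hj ⊢
      exact lt_of_lt_of_le hj hx
    have h := (Finset.card_le_card hsub).trans (aux_card_lt v ⟨k - 1, by omega⟩)
    have hv : ((⟨k - 1, by omega⟩ : Fin n) : ℕ) = k - 1 := rfl
    omega
  · intro hcard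
    by_contra hx
    push_neg at hx
    -- all sorted positions m with m < k satisfy v (sort v m) < x
    have hsub : (univ.filter fun t : Fin n => (t : ℕ) < k) ⊆
        Finset.image (Tuple.sort v).symm (univ.filter fun j => v j < x) := by
      intro m hm
      simp only [mem_filter, mem_univ, true_and] at hm
      refine Finset.mem_image.mpr ⟨Tuple.sort v m, ?_, by simp⟩
      simp only [mem_filter, mem_univ, true_and]
      calc v (Tuple.sort v m) ≤ v (Tuple.sort v ⟨k - 1, by omega⟩) := by
            have hv : ((⟨k - 1, by omega⟩ : Fin n) : ℕ) = k - 1 := rfl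
            have : m ≤ (⟨k - 1, by omega⟩ : Fin n) := Fin.le_def.mpr (by omega)
            exact Tuple.monotone_sort v this
        _ < x := hx
    have h1 := Finset.card_le_card hsub
    rw [aux_card_val_lt hkn] at h1
    have h2 := Finset.card_image_le (f := (Tuple.sort v).symm)
      (s := univ.filter fun j => v j < x)
    omega

/-- key2: at least `k` indices `i` have fewer than `k` entries strictly below `w i`. -/
lemma aux_key2 {N : ℕ} (w : Fin N → ℝ) (k : ℕ) (hk : k ≤ N) :
    k ≤ (univ.filter fun i : Fin N =>
        (univ.filter fun j => w j < w i).card < k).card := by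
  classical
  have hsub : Finset.image (Tuple.sort w) (univ.filter fun t : Fin N => (t : ℕ) < k) ⊆
      (univ.filter fun i : Fin N => (univ.filter fun j => w j < w i).card < k) := by
    intro i hi
    obtain ⟨m, hm, rfl⟩ := Finset.mem_image.mp hi
    simp only [mem_filter, mem_univ, true_and] at hm ⊢
    exact lt_of_le_of_lt (aux_card_lt w m) hm
  have h1 := Finset.card_le_card hsub
  rwa [Finset.card_image_of_injective _ (Tuple.sort w).injective, aux_card_val_lt hk] at h1

lemma aux_card_perm {N : ℕ} (w : Fin N → ℝ) (σ : Equiv.Perm (Fin N)) (i : Fin N) :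
    (univ.filter fun j => (w ∘ σ) j < (w ∘ σ) i).card
      = (univ.filter fun j => w j < w (σ i)).card := by
  classical
  apply Finset.card_bij (fun j _ => σ j)
  · intro a ha; simp only [mem_filter, mem_univ, true_and, Function.comp_apply] at ha ⊢; exact ha
  · intro a _ b _ hab; exact σ.injective hab
  · intro b hb
    simp only [mem_filter, mem_univ, true_and, Function.comp_apply] at hb ⊢
    exact ⟨σ.symm b, by simpa using hb, by simp⟩

lemma aux_meas {N : ℕ} (i : Fin N) (k : ℕ) :
    MeasurableSet {w : Fin N → ℝ | (univ.filter fun j => w j < w i).card < k} := by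
  classical
  have hm : Measurable fun w : Fin N → ℝ => (univ.filter fun j => w j < w i).card := by
    simp_rw [Finset.card_filter]
    exact Finset.measurable_sum _ (fun j _ => Measurable.ite
      (measurableSet_lt (measurable_pi_apply j) (measurable_pi_apply i))
      measurable_const measurable_const)
  exact hm measurableSet_Iio

/-- Conformal prediction coverage: if `(s₁,…,s_n,s_new)` is exchangeable and
`q` is the `⌈(1−δ)(n+1)⌉`-th smallest of `s₁,…,s_n` (`+∞` if out of range),
then `P[s_new ≤ q] ≥ 1 − δ`. -/
theorem stmt_9 {Ω : Type*} [MeasurableSpace Ω] (μ : Measure Ω) [IsProbabilityMeasure μ]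
    (n : ℕ) (s : Fin n → Ω → ℝ) (snew : Ω → ℝ)
    (hmeas : ∀ i, Measurable (s i)) (hmeasnew : Measurable snew)
    (hexch : ∀ σ : Equiv.Perm (Fin (n + 1)),
      Measure.map (fun ω => (Fin.snoc (fun i => s i ω) (snew ω) : Fin (n + 1) → ℝ) ∘ σ) μ =
        Measure.map (fun ω => (Fin.snoc (fun i => s i ω) (snew ω) : Fin (n + 1) → ℝ)) μ)
    (δ : ℝ) (hδ : δ ∈ Set.Ioo (0 : ℝ) 1) :
    μ {ω | (snew ω : EReal) ≤ orderStat (fun i => s i ω) ⌈(1 - δ) * ((n : ℝ) + 1)⌉₊} ≥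
      ENNReal.ofReal (1 - δ) := by
  classical
  obtain ⟨hδ0, hδ1⟩ := hδ
  set k : ℕ := ⌈(1 - δ) * ((n : ℝ) + 1)⌉₊ with hkdef
  have hk1 : 1 ≤ k := by
    rw [hkdef]
    refine Nat.one_le_ceil_iff.mpr ?_
    have : (0:ℝ) < (n:ℝ) + 1 := by positivity
    nlinarith
  by_cases hkn : k ≤ n
  case neg =>
    have hset : {ω | (snew ω : EReal) ≤ orderStat (fun i => s i ω) k} = Set.univ := by
      ext ω
      simp only [Set.mem_setOf_eq, Set.mem_univ, iff_true, orderStat,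
        dif_neg (fun h : 1 ≤ k ∧ k ≤ n => hkn h.2)]
      exact le_top
    rw [hset, measure_univ]
    exact ENNReal.ofReal_le_one.mpr (by linarith)
  case pos =>
    set W : Ω → (Fin (n + 1) → ℝ) := fun ω => Fin.snoc (fun i => s i ω) (snew ω) with hWdef
    have hW : Measurable W := by
      apply measurable_pi_lambda
      intro i
      refine Fin.lastCases ?_ ?_ i
      · simpa only [hWdef, Fin.snoc_last] using hmeasnew
      · intro j
        simpa only [hWdef, Fin.snoc_castSucc] using hmeas j
    set B : Fin (n + 1) → Set (Fin (n + 1) → ℝ) :=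
      fun i => {w | (univ.filter fun j => w j < w i).card < k} with hBdef
    have hB : ∀ i, MeasurableSet (B i) := fun i => aux_meas i k
    -- all preimages have the same measure
    have hμB : ∀ i, μ (W ⁻¹' B i) = μ (W ⁻¹' B (Fin.last n)) := by
      intro i
      set σ := Equiv.swap i (Fin.last n) with hσ
      have hWσ : Measurable (fun ω => W ω ∘ σ) := by
        apply measurable_pi_lambda
        intro j
        exact (measurable_pi_apply (σ j)).comp hW
      have h1 : μ (W ⁻¹' B (Fin.last n)) = Measure.map W μ (B (Fin.last n)) :=
        (Measure.map_apply hW (hB _)).symm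
      rw [h1, ← hexch σ, Measure.map_apply hWσ (hB _)]
      congr 1
      ext ω
      simp only [Set.mem_preimage, hBdef, Set.mem_setOf_eq]
      rw [aux_card_perm (W ω) σ (Fin.last n), hσ, Equiv.swap_apply_right]
  -- pointwise bound and summation
    have hptw : ∀ ω, (k : ℝ≥0∞) ≤ ∑ i : Fin (n + 1),
        (W ⁻¹' B i).indicator (fun _ => (1 : ℝ≥0∞)) ω := by
      intro ω
      have hcount := aux_key2 (W ω) k (by omega)
      calc (k : ℝ≥0∞) ≤ ((univ.filter fun i : Fin (n+1) =>
              (univ.filter fun j => W ω j < W ω i).card < k).card : ℝ≥0∞) := by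
            exact_mod_cast hcount
        _ = ∑ i : Fin (n + 1), (W ⁻¹' B i).indicator (fun _ => (1 : ℝ≥0∞)) ω := by
            rw [Finset.card_filter]
            push_cast
            refine Finset.sum_congr rfl fun i _ => ?_
            simp [Set.indicator_apply, Set.mem_preimage, hBdef]
    have hsum : (k : ℝ≥0∞) ≤ ∑ i : Fin (n + 1), μ (W ⁻¹' B i) := by
      have h1 : (k : ℝ≥0∞) = ∫⁻ _, (k : ℝ≥0∞) ∂μ := by
        rw [lintegral_const, measure_univ, mul_one]
      rw [h1]
      calc ∫⁻ _, (k : ℝ≥0∞) ∂μ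
          ≤ ∫⁻ ω, ∑ i : Fin (n + 1),
              (W ⁻¹' B i).indicator (fun _ => (1 : ℝ≥0∞)) ω ∂μ :=
            lintegral_mono hptw
        _ = ∑ i : Fin (n + 1), ∫⁻ ω,
              (W ⁻¹' B i).indicator (fun _ => (1 : ℝ≥0∞)) ω ∂μ := by
            refine lintegral_finset_sum _ fun i _ => ?_
            exact measurable_const.indicator (hW (hB i))
        _ = ∑ i : Fin (n + 1), μ (W ⁻¹' B i) := by
            refine Finset.sum_congr rfl fun i _ => ?_
            exact lintegral_indicator_one (hW (hB i))
    have hsum2 : (k : ℝ≥0∞) ≤ ((n : ℝ≥0∞) + 1) * μ (W ⁻¹' B (Fin.last n)) := by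
      calc (k : ℝ≥0∞) ≤ ∑ i : Fin (n + 1), μ (W ⁻¹' B i) := hsum
        _ = ∑ _i : Fin (n + 1), μ (W ⁻¹' B (Fin.last n)) :=
            Finset.sum_congr rfl fun i _ => hμB i
        _ = ((n : ℝ≥0∞) + 1) * μ (W ⁻¹' B (Fin.last n)) := by
            rw [Finset.sum_const, Finset.card_univ, Fintype.card_fin]
            simp [nsmul_eq_mul]
    -- identify the event
    have hset : {ω | (snew ω : EReal) ≤ orderStat (fun i => s i ω) k} = W ⁻¹' B (Fin.last n) := by
      ext ω
      simp only [Set.mem_setOf_eq, Set.mem_preimage, hBdef, Set.mem_setOf_eq, orderStat,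
        dif_pos (And.intro hk1 hkn)]
      rw [show (((fun i => s i ω) ∘ Tuple.sort (fun i => s i ω)) ⟨k - 1, by omega⟩ : ℝ)
          = (fun i => s i ω) (Tuple.sort (fun i => s i ω) ⟨k - 1, by omega⟩) from rfl]
      rw [EReal.coe_le_coe_iff]
      rw [aux_key1 (fun i => s i ω) (snew ω) k hk1 hkn]
      have hcards : (univ.filter fun j : Fin (n+1) => W ω j < W ω (Fin.last n)).card
          = (univ.filter fun j : Fin n => s j ω < snew ω).card := by
        rw [Finset.card_filter, Finset.card_filter, Fin.sum_univ_castSucc]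
        simp [hWdef, Fin.snoc_castSucc, Fin.snoc_last]
      rw [hcards]
    rw [hset]
    -- conclude
    have hceil : (1 - δ) * ((n : ℝ) + 1) ≤ (k : ℝ) := Nat.le_ceil _
    have hn0 : ((n : ℝ≥0∞) + 1) ≠ 0 := by simp
    have hntop : ((n : ℝ≥0∞) + 1) ≠ ⊤ := by simp
    have hdiv : (k : ℝ≥0∞) / ((n : ℝ≥0∞) + 1) ≤ μ (W ⁻¹' B (Fin.last n)) :=
      (ENNReal.div_le_iff hn0 hntop).mpr (by rw [mul_comm] at hsum2; exact hsum2)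
    refine le_trans ?_ hdiv
    rw [ENNReal.le_div_iff_mul_le (Or.inl hn0) (Or.inl hntop)]
    have : ENNReal.ofReal (1 - δ) * ((n : ℝ≥0∞) + 1)
        = ENNReal.ofReal ((1 - δ) * ((n : ℝ) + 1)) := by
      rw [ENNReal.ofReal_mul (by linarith)]
      congr 1
      rw [ENNReal.ofReal_add (by positivity) (by norm_num)]
      simp [ENNReal.ofReal_natCast]
    rw [this]
    calc ENNReal.ofReal ((1 - δ) * ((n : ℝ) + 1)) ≤ ENNReal.ofReal (k : ℝ) :=
          ENNReal.ofReal_le_ofReal hceil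
      _ = (k : ℝ≥0∞) := ENNReal.ofReal_natCast k
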